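/- Let G be a graph with no induced cycle on at least t vertices, and let K be a minimal clique minor in G with at least 3 branch sets. Then for each branch set K ∈ 𝒦, every shortest path in the induced subgraph G[K] has fewer than t vertices (equivalently, G[K] has diameter less than t−1). -/

import Mathlib

/-- `G` contains an induced copy of `H`. -/
def HasInducedCopy {W V : Type*} (H : SimpleGraph W) (G : SimpleGraph V) : Prop :=
  ∃ f : W ↪ V, ∀ a b : W, G.Adj (f a) (f b) ↔ H.Adj a b

/-- `G` is `C_{≥t}`-free: it has no induced cycle with at least `t` vertices. -/
def CgeFree {V : Type*} (t : ℕ) (G : SimpleGraph V) : Prop :=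
  ∀ n : ℕ, t ≤ n → ¬ HasInducedCopy (SimpleGraph.cycleGraph n) G

/-- `𝒦` is a clique minor of `G`: a family of pairwise disjoint branch sets,
each inducing a connected subgraph, with an edge between every two of them. -/
def IsCliqueMinor {V : Type*} (G : SimpleGraph V) (𝒦 : Finset (Finset V)) : Prop :=
  (∀ K ∈ 𝒦, (G.induce (K : Set V)).Connected) ∧
  (∀ K ∈ 𝒦, ∀ K' ∈ 𝒦, K ≠ K' → Disjoint K K') ∧
  (∀ K ∈ 𝒦, ∀ K' ∈ 𝒦, K ≠ K' → ∃ u ∈ K, ∃ v ∈ K', G.Adj u v)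

/-- `𝒦` is a minimal clique minor: no branch set can be replaced by a proper
subset while keeping the clique-minor property. -/
def IsMinimalCliqueMinor {V : Type*} [DecidableEq V] (G : SimpleGraph V)
    (𝒦 : Finset (Finset V)) : Prop :=
  IsCliqueMinor G 𝒦 ∧
  ∀ K ∈ 𝒦, ∀ K' : Finset V, K' ⊂ K → ¬ IsCliqueMinor G (insert K' (𝒦.erase K))

section Aux

lemma fin_sub_val_eq_one {n : ℕ} (hn : 2 ≤ n) (a b : Fin n) :
    (a - b).val = 1 ↔ (a.val = b.val + 1 ∨ (a.val = 0 ∧ b.val = n - 1)) := by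
  have hs : (a - b).val = (a.val + (n - b.val)) % n := by
    rw [Fin.sub_def]; simp [Nat.add_comm]
  have ha := a.isLt
  have hb := b.isLt
  rcases le_or_gt b.val a.val with h | h
  · have : (a.val + (n - b.val)) % n = a.val - b.val := by
      have : a.val + (n - b.val) = (a.val - b.val) + n := by omega
      rw [this, Nat.add_mod_right, Nat.mod_eq_of_lt (by omega)]
    rw [hs, this]
    omega
  · have : (a.val + (n - b.val)) % n = a.val + (n - b.val) := by
      apply Nat.mod_eq_of_lt; omega
    rw [hs, this]
    omega

lemma cycleGraph_adj_val {n : ℕ} (hn : 2 ≤ n) (a b : Fin n) :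
    (SimpleGraph.cycleGraph n).Adj a b ↔
      (a.val = b.val + 1 ∨ b.val = a.val + 1 ∨ (a.val = 0 ∧ b.val = n - 1) ∨
        (b.val = 0 ∧ a.val = n - 1)) := by
  rw [SimpleGraph.cycleGraph_adj', fin_sub_val_eq_one hn, fin_sub_val_eq_one hn]
  tauto

lemma exists_walk_segment {W : Type*} {H : SimpleGraph W} :
    ∀ {a b : W} (w : H.Walk a b) (i j : ℕ), i ≤ j → j ≤ w.length →
      ∃ f : H.Walk (w.getVert i) (w.getVert j), f.length = j - i := by
  intro a b w
  induction w with
  | nil =>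
    intro i j hij hj
    simp only [SimpleGraph.Walk.length_nil, Nat.le_zero] at hj
    subst hj
    have : i = 0 := Nat.le_zero.mp hij
    subst this
    exact ⟨SimpleGraph.Walk.nil, rfl⟩
  | @cons x y z h p ih =>
    intro i j hij hj
    rw [SimpleGraph.Walk.length_cons] at hj
    match i, j with
    | 0, 0 => exact ⟨SimpleGraph.Walk.nil, rfl⟩
    | 0, (j+1) =>
      obtain ⟨f, hf⟩ := ih 0 j (Nat.zero_le _) (by omega)
      exact ⟨SimpleGraph.Walk.cons h (f.copy p.getVert_zero rfl), by
        change (f.copy _ _).length + 1 = _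
        exact (congrArg (· + 1) ((SimpleGraph.Walk.length_copy _ _ _).trans hf)).trans (by omega)⟩
    | (i+1), (j+1) =>
      obtain ⟨f, hf⟩ := ih i j (by omega) (by omega)
      exact ⟨f.copy rfl rfl, by simpa using hf⟩

lemma geodesic_dist {W : Type*} {H : SimpleGraph W} {a b : W} (w : H.Walk a b)
    (hw : w.length = H.dist a b) {i j : ℕ} (hij : i ≤ j) (hj : j ≤ w.length) :
    H.dist (w.getVert i) (w.getVert j) = j - i := by
  obtain ⟨f, hf⟩ := exists_walk_segment w i j hij hj
  have hub : H.dist (w.getVert i) (w.getVert j) ≤ j - i := hf ▸ SimpleGraph.dist_le f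
  refine le_antisymm hub ?_
  obtain ⟨g, hg⟩ := SimpleGraph.Reachable.exists_walk_length_eq_dist
    (⟨f⟩ : H.Reachable (w.getVert i) (w.getVert j))
  obtain ⟨w1, hw1⟩ := exists_walk_segment w 0 i (Nat.zero_le _) (le_trans hij hj)
  obtain ⟨w3, hw3⟩ := exists_walk_segment w j w.length hj le_rfl
  have htot : H.dist a b ≤ i + (H.dist (w.getVert i) (w.getVert j) + (w.length - j)) := by
    have := SimpleGraph.dist_le
      (((w1.copy w.getVert_zero rfl).append (g.append (w3.copy rfl w.getVert_length))))
    simpa [SimpleGraph.Walk.length_append, hw1, hg, hw3] using this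
  omega

lemma geodesic_getVert_ne {W : Type*} {H : SimpleGraph W} {a b : W} (w : H.Walk a b)
    (hw : w.length = H.dist a b) {i j : ℕ} (hij : i < j) (hj : j ≤ w.length) :
    w.getVert i ≠ w.getVert j := by
  intro hEq
  have := geodesic_dist w hw (Nat.le_of_lt hij) hj
  rw [hEq, SimpleGraph.dist_self] at this
  omega

lemma geodesic_adj_iff {W : Type*} {H : SimpleGraph W} {a b : W} (w : H.Walk a b)
    (hw : w.length = H.dist a b) {i j : ℕ} (hi : i ≤ w.length) (hj : j ≤ w.length) :
    H.Adj (w.getVert i) (w.getVert j) ↔ (j = i + 1 ∨ i = j + 1) := by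
  constructor
  · intro hadj
    rcases Nat.lt_trichotomy i j with h | h | h
    · have := geodesic_dist w hw (Nat.le_of_lt h) hj
      rw [(SimpleGraph.dist_eq_one_iff_adj).mpr hadj] at this
      omega
    · subst h; exact absurd hadj (H.loopless.irrefl _)
    · have := geodesic_dist w hw (Nat.le_of_lt h) hi
      rw [(SimpleGraph.dist_eq_one_iff_adj).mpr hadj.symm] at this
      omega
  · rintro (rfl | rfl)
    · exact w.adj_getVert_succ (by omega)
    · exact (w.adj_getVert_succ (by omega)).symm

lemma induce_adj_iff {V : Type*} {G : SimpleGraph V} {A : Set V} (x y : ↥A) :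
    (G.induce A).Adj x y ↔ G.Adj ↑x ↑y := by
  simp [SimpleGraph.induce]

lemma reachable_induce_of_support {V : Type*} {G : SimpleGraph V} {A B : Set V} :
    ∀ {a b : ↥A} (w : (G.induce A).Walk a b)
      (_ : ∀ x ∈ w.support, (x : V) ∈ B) (ha : ↑a ∈ B) (hb : ↑b ∈ B),
      (G.induce B).Reachable ⟨↑a, ha⟩ ⟨↑b, hb⟩ := by
  intro a b w
  induction w with
  | nil => intro _ ha hb; rfl
  | @cons x y z h p ih =>
    intro hsupp ha hb
    have hy : (y : V) ∈ B := hsupp y (by simp)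
    have h1 : (G.induce B).Adj ⟨↑x, ha⟩ ⟨↑y, hy⟩ := by
      rw [induce_adj_iff]
      exact (induce_adj_iff x y).mp h
    exact (h1.reachable).trans (ih (fun v hv => hsupp v (by simp [hv])) hy hb)

/-- Gluing two induced paths sharing endpoints into an induced cycle. -/
lemma glue_hole {V : Type*} (G : SimpleGraph V) (n₁ n₂ : ℕ) (h1 : 2 ≤ n₁) (h2 : 2 ≤ n₂)
    (p q : ℕ → V) (hpq0 : p 0 = q 0) (hpqe : p n₁ = q n₂)
    (hpinj : ∀ i j, i < j → j ≤ n₁ → p i ≠ p j)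
    (hqinj : ∀ i j, i < j → j ≤ n₂ → q i ≠ q j)
    (hpadj : ∀ i j, i ≤ n₁ → j ≤ n₁ → (G.Adj (p i) (p j) ↔ (j = i + 1 ∨ i = j + 1)))
    (hqadj : ∀ i j, i ≤ n₂ → j ≤ n₂ → (G.Adj (q i) (q j) ↔ (j = i + 1 ∨ i = j + 1)))
    (hdisj : ∀ i j, 0 < i → i < n₁ → 0 < j → j < n₂ → p i ≠ q j)
    (hcross : ∀ i j, 0 < i → i < n₁ → 0 < j → j < n₂ → ¬ G.Adj (p i) (q j)) :
    HasInducedCopy (SimpleGraph.cycleGraph (n₁ + n₂)) G := by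
  have hn4 : 4 ≤ n₁ + n₂ := by omega
  set g : ℕ → V := fun k => if k ≤ n₁ then p k else q (n₁ + n₂ - k) with hg
  have hgle : ∀ k, k ≤ n₁ → g k = p k := fun k hk => if_pos hk
  have hggt : ∀ k, n₁ < k → g k = q (n₁ + n₂ - k) := fun k hk => if_neg (by omega)
  have hginj : ∀ k₁ k₂, k₁ < k₂ → k₂ < n₁ + n₂ → g k₁ ≠ g k₂ := by
    intro k₁ k₂ hlt hk₂
    rcases le_or_gt k₁ n₁ with hA | hA <;> rcases le_or_gt k₂ n₁ with hB | hB
    · rw [hgle _ hA, hgle _ hB]; exact hpinj _ _ hlt hB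
    · rw [hgle _ hA, hggt _ hB]
      rcases Nat.eq_zero_or_pos k₁ with rfl | hk₁
      · rw [hpq0]; exact hqinj 0 (n₁ + n₂ - k₂) (by omega) (by omega)
      · rcases eq_or_lt_of_le hA with hk₁' | hk₁'
        · rw [hk₁', hpqe]; intro hEq
          exact hqinj (n₁ + n₂ - k₂) n₂ (by omega) le_rfl hEq.symm
        · exact hdisj _ _ hk₁ hk₁' (by omega) (by omega)
    · omega
    · rw [hggt _ hA, hggt _ hB]
      intro hEq
      exact hqinj (n₁ + n₂ - k₂) (n₁ + n₂ - k₁) (by omega) (by omega) hEq.symm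
  have hmix : ∀ A B, A ≤ n₁ → n₁ < B → B < n₁ + n₂ →
      (G.Adj (g A) (g B) ↔
        (A = B + 1 ∨ B = A + 1 ∨ (A = 0 ∧ B = n₁ + n₂ - 1) ∨ (B = 0 ∧ A = n₁ + n₂ - 1))) := by
    intro A B hA hB hBn
    rw [hgle _ hA, hggt _ hB]
    rcases Nat.eq_zero_or_pos A with rfl | hApos
    · rw [hpq0, hqadj 0 (n₁ + n₂ - B) (by omega) (by omega)]
      constructor <;> intro h' <;> omega
    · rcases eq_or_lt_of_le hA with hAe | hAlt
      · rw [hAe, hpqe, hqadj n₂ (n₁ + n₂ - B) le_rfl (by omega)]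
        constructor <;> intro h' <;> omega
      · rw [iff_false_intro (hcross A (n₁ + n₂ - B) hApos hAlt (by omega) (by omega))]
        constructor
        · exact fun h' => h'.elim
        · intro h'; omega
  have hgadj : ∀ A B, A < n₁ + n₂ → B < n₁ + n₂ →
      (G.Adj (g A) (g B) ↔
        (A = B + 1 ∨ B = A + 1 ∨ (A = 0 ∧ B = n₁ + n₂ - 1) ∨ (B = 0 ∧ A = n₁ + n₂ - 1))) := by
    intro A B hAn hBn
    rcases le_or_gt A n₁ with hA | hA <;> rcases le_or_gt B n₁ with hB | hB
    · rw [hgle _ hA, hgle _ hB, hpadj A B hA hB]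
      constructor <;> intro h' <;> omega
    · exact hmix A B hA hB hBn
    · rw [G.adj_comm, hmix B A hB hA hAn]
      constructor <;> intro h' <;> omega
    · rw [hggt _ hA, hggt _ hB]
      rw [hqadj (n₁ + n₂ - A) (n₁ + n₂ - B) (by omega) (by omega)]
      constructor <;> intro h' <;> omega
  refine ⟨⟨fun k => g k.val, ?_⟩, ?_⟩
  · intro k₁ k₂ hEq
    by_contra hne
    rcases Nat.lt_trichotomy k₁.val k₂.val with h | h | h
    · exact hginj _ _ h k₂.isLt hEq
    · exact hne (Fin.ext h)
    · exact hginj _ _ h k₁.isLt hEq.symm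
  · intro a b
    rw [cycleGraph_adj_val (by omega) a b]
    exact hgadj a.val b.val a.isLt b.isLt

end Aux

theorem stmt11 {V : Type*} [Fintype V] [DecidableEq V] (G : SimpleGraph V)
    (t : ℕ) (ht : 4 ≤ t) (hG : CgeFree t G) (𝒦 : Finset (Finset V))
    (hmin : IsMinimalCliqueMinor G 𝒦) (hsize : 3 ≤ 𝒦.card) :
    ∀ K ∈ 𝒦, ∀ u v : (K : Set V), (G.induce (K : Set V)).dist u v + 1 < t := by
  by_contra hcon
  push_neg at hcon
  obtain ⟨K, hK, hrest⟩ := hcon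
  obtain ⟨⟨hconnAll, hdisjAll, hedgeAll⟩, hMin⟩ := hmin
  set S : Set V := (K : Set V) with hS
  obtain ⟨u0, v0, hud⟩ := hrest
  have hconn' : (G.induce S).Connected := hconnAll K hK
  -- diametral pair
  obtain ⟨⟨u, v⟩, -, hmax⟩ := Finset.exists_max_image (Finset.univ : Finset (↥S × ↥S))
    (fun p => (G.induce S).dist p.1 p.2) ⟨(u0, v0), Finset.mem_univ _⟩
  set d : ℕ := (G.induce S).dist u v with hd
  have hdiam : ∀ x y : ↥S, (G.induce S).dist x y ≤ d := fun x y =>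
    hmax (x, y) (Finset.mem_univ _)
  have hdt : t ≤ d + 1 := by
    have := hdiam u0 v0
    omega
  have hd3 : 3 ≤ d := by omega
  have huv : u ≠ v := by
    intro h
    rw [h, SimpleGraph.dist_self] at hd
    omega
  obtain ⟨P, hP⟩ := hconn'.exists_walk_length_eq_dist u v
  -- the key minimality consequence
  have main : ∀ a b : ↥S, (G.induce S).dist a b = d →
      ∃ L ∈ 𝒦, L ≠ K ∧ (∃ z ∈ L, G.Adj ↑a z) ∧
        (∀ x ∈ K, ∀ z ∈ L, G.Adj x z → x = (↑a : V)) := by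
    intro a b hab
    have hane : a ≠ b := by
      intro h
      rw [h, SimpleGraph.dist_self] at hab
      omega
    have haK : (↑a : V) ∈ K := a.2
    set K₁ : Finset V := K.erase ↑a with hK₁def
    have hbK₁ : (↑b : V) ∈ K₁ :=
      Finset.mem_erase.mpr ⟨fun h => hane (Subtype.ext h.symm), b.2⟩
    have hK₁sub : (↑K₁ : Set V) ⊆ S := fun x hx => Finset.mem_coe.mpr
      (Finset.mem_of_mem_erase (Finset.mem_coe.mp hx))
    -- b reaches everything in K ∖ {a}
    have hreach₁ : ∀ (x : ↥(↑K₁ : Set V)),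
        (G.induce (↑K₁ : Set V)).Reachable ⟨↑b, hbK₁⟩ ⟨↑x, x.2⟩ := by
      intro x
      have hxS : (↑x : V) ∈ S := hK₁sub x.2
      have hx'a : (⟨↑x, hxS⟩ : ↥S) ≠ a := by
        intro h
        have : (↑x : V) = ↑a := congrArg Subtype.val h
        exact (Finset.mem_erase.mp (Finset.mem_coe.mp x.2)).1 this
      obtain ⟨Wx, hWx⟩ := hconn'.exists_walk_length_eq_dist b ⟨↑x, hxS⟩
      have hsupp : ∀ z ∈ Wx.support, (↑z : V) ∈ (↑K₁ : Set V) := by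
        intro z hz
        obtain ⟨n, hzn, hnle⟩ := SimpleGraph.Walk.mem_support_iff_exists_getVert.mp hz
        refine Finset.mem_coe.mpr (Finset.mem_erase.mpr ⟨?_, z.2⟩)
        intro hza
        have hzaa : z = a := Subtype.ext hza
        have hdbz : (G.induce S).dist (Wx.getVert 0) (Wx.getVert n) = n :=
          geodesic_dist Wx hWx (Nat.zero_le _) hnle
        rw [Wx.getVert_zero, hzn, hzaa] at hdbz
        have hba : (G.induce S).dist b a = d := by
          rw [SimpleGraph.dist_comm]; exact hab
        have hlen : Wx.length ≤ d := hWx ▸ hdiam b ⟨↑x, hxS⟩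
        have hnlen : n = Wx.length := by omega
        have : z = ⟨↑x, hxS⟩ := by rw [← hzn, hnlen, Wx.getVert_length]
        exact hx'a (by rw [← this, hzaa])
      exact reachable_induce_of_support Wx hsupp hbK₁ x.2
    have hconn₁ : (G.induce (↑K₁ : Set V)).Connected := by
      haveI : Nonempty ↥(↑K₁ : Set V) := ⟨⟨↑b, hbK₁⟩⟩
      refine ⟨fun x y => ?_⟩
      exact (hreach₁ x).symm.trans (hreach₁ y)
    have hssub : K₁ ⊂ K := Finset.erase_ssubset haK
    have hnot := hMin K hK K₁ hssub
    unfold IsCliqueMinor at hnot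
    push_neg at hnot
    have hC1 : ∀ K'' ∈ insert K₁ (𝒦.erase K), (G.induce (K'' : Set V)).Connected := by
      intro K'' hK''
      rcases Finset.mem_insert.mp hK'' with rfl | hmem
      · exact hconn₁
      · exact hconnAll K'' (Finset.mem_of_mem_erase hmem)
    have hC2 : ∀ A ∈ insert K₁ (𝒦.erase K), ∀ B ∈ insert K₁ (𝒦.erase K),
        A ≠ B → Disjoint A B := by
      intro A hA B hB hAB
      rcases Finset.mem_insert.mp hA with rfl | hAe <;>
        rcases Finset.mem_insert.mp hB with h | hBe
      · exact absurd h.symm hAB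
      · have hBK : B ≠ K := (Finset.mem_erase.mp hBe).1
        exact Finset.disjoint_of_subset_left (Finset.erase_subset _ _)
          (hdisjAll K hK B (Finset.mem_of_mem_erase hBe) (Ne.symm hBK))
      · have hAK : A ≠ K := (Finset.mem_erase.mp hAe).1
        subst h
        exact (Finset.disjoint_of_subset_right (Finset.erase_subset _ _)
          (hdisjAll A (Finset.mem_of_mem_erase hAe) K hK hAK))
      · exact hdisjAll A (Finset.mem_of_mem_erase hAe) B (Finset.mem_of_mem_erase hBe) hAB
    obtain ⟨A, hA, B, hB, hAB, hno⟩ := hnot hC1 hC2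
    -- extract the branch set L with unique attachment a
    have extract : ∀ L : Finset V, L ∈ 𝒦.erase K →
        (∀ x ∈ K₁, ∀ z ∈ L, ¬ G.Adj x z) →
        ∃ L' ∈ 𝒦, L' ≠ K ∧ (∃ z ∈ L', G.Adj ↑a z) ∧
          (∀ x ∈ K, ∀ z ∈ L', G.Adj x z → x = (↑a : V)) := by
      intro L hLe hnoL
      have hLmem : L ∈ 𝒦 := Finset.mem_of_mem_erase hLe
      have hLK : L ≠ K := (Finset.mem_erase.mp hLe).1
      obtain ⟨x0, hx0, z0, hz0, hadj⟩ := hedgeAll K hK L hLmem (Ne.symm hLK)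
      have hx0a : x0 = (↑a : V) := by
        by_contra h
        exact hnoL x0 (Finset.mem_erase.mpr ⟨h, hx0⟩) z0 hz0 hadj
      refine ⟨L, hLmem, hLK, ⟨z0, hz0, hx0a ▸ hadj⟩, ?_⟩
      intro x hx z hz hadjx
      by_contra h
      exact hnoL x (Finset.mem_erase.mpr ⟨h, hx⟩) z hz hadjx
    rcases Finset.mem_insert.mp hA with rfl | hAe <;>
      rcases Finset.mem_insert.mp hB with h | hBe
    · exact absurd h.symm hAB
    · exact extract B hBe hno
    · subst h
      exact extract A hAe (fun x hx z hz hadj => hno z hz x hx hadj.symm)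
    · obtain ⟨x0, hx0, z0, hz0, hadj⟩ :=
        hedgeAll A (Finset.mem_of_mem_erase hAe) B (Finset.mem_of_mem_erase hBe) hAB
      exact absurd hadj (hno x0 hx0 z0 hz0)
  -- apply to both endpoints
  obtain ⟨L, hL, hLK, ⟨zL, hzL, hadjuL⟩, huniqL⟩ := main u v hd.symm
  obtain ⟨M, hM, hMK, ⟨zM, hzM, hadjvM⟩, huniqM⟩ := main v u
    (by rw [SimpleGraph.dist_comm])
  have hLM : L ≠ M := by
    intro h
    have := huniqM ↑u u.2 zL (h ▸ hzL) hadjuL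
    exact huv (Subtype.ext this)
  -- the outside set
  set T : Set V := insert (↑u : V) (insert (↑v : V) ((L : Set V) ∪ (M : Set V))) with hT
  have huT : (↑u : V) ∈ T := Set.mem_insert _ _
  have hvT : (↑v : V) ∈ T := Set.mem_insert_of_mem _ (Set.mem_insert _ _)
  have hLsubT : (L : Set V) ⊆ T := fun z hz =>
    Set.mem_insert_of_mem _ (Set.mem_insert_of_mem _ (Set.mem_union_left _ hz))
  have hMsubT : (M : Set V) ⊆ T := fun z hz =>
    Set.mem_insert_of_mem _ (Set.mem_insert_of_mem _ (Set.mem_union_right _ hz))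
  -- reachability from u to v inside T
  have hreachT : (G.induce T).Reachable ⟨↑u, huT⟩ ⟨↑v, hvT⟩ := by
    obtain ⟨z1, hz1, z2, hz2, hadj12⟩ := hedgeAll L hL M hM hLM
    have r1 : (G.induce T).Adj ⟨↑u, huT⟩ ⟨zL, hLsubT hzL⟩ := by
      rw [induce_adj_iff]; exact hadjuL
    have r2 : (G.induce T).Reachable ⟨zL, hLsubT hzL⟩ ⟨z1, hLsubT hz1⟩ := by
      obtain ⟨w⟩ := (hconnAll L hL).preconnected ⟨zL, hzL⟩ ⟨z1, hz1⟩
      exact reachable_induce_of_support w (fun x _ => hLsubT x.2) (hLsubT hzL) (hLsubT hz1)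
    have r3 : (G.induce T).Adj ⟨z1, hLsubT hz1⟩ ⟨z2, hMsubT hz2⟩ := by
      rw [induce_adj_iff]; exact hadj12
    have r4 : (G.induce T).Reachable ⟨z2, hMsubT hz2⟩ ⟨zM, hMsubT hzM⟩ := by
      obtain ⟨w⟩ := (hconnAll M hM).preconnected ⟨z2, hz2⟩ ⟨zM, hzM⟩
      exact reachable_induce_of_support w (fun x _ => hMsubT x.2) (hMsubT hz2) (hMsubT hzM)
    have r5 : (G.induce T).Adj ⟨zM, hMsubT hzM⟩ ⟨↑v, hvT⟩ := by
      rw [induce_adj_iff]; exact hadjvM.symm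
    exact r1.reachable.trans (r2.trans (r3.reachable.trans (r4.trans r5.reachable)))
  set m : ℕ := (G.induce T).dist ⟨↑u, huT⟩ ⟨↑v, hvT⟩ with hm
  obtain ⟨Q, hQ⟩ := hreachT.exists_walk_length_eq_dist
  have huvV : (↑u : V) ≠ ↑v := fun h => huv (Subtype.ext h)
  have hm2 : 2 ≤ m := by
    have hm0 : 0 < m := hreachT.pos_dist_of_ne (by intro h; have h2 := congrArg Subtype.val h; exact huvV h2)
    have hm1 : m ≠ 1 := by
      intro h1
      have hadj : (G.induce T).Adj ⟨↑u, huT⟩ ⟨↑v, hvT⟩ :=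
        SimpleGraph.dist_eq_one_iff_adj.mp (hm.symm.trans h1)
      rw [induce_adj_iff] at hadj
      have hSadj : (G.induce S).Adj u v := by rw [induce_adj_iff]; exact hadj
      have := SimpleGraph.dist_eq_one_iff_adj.mpr hSadj
      omega
    omega
  -- set up the two paths
  have hPlen : P.length = d := hP
  have hQlen : Q.length = m := hQ
  set p : ℕ → V := fun i => ↑(P.getVert i) with hp
  set q : ℕ → V := fun j => ↑(Q.getVert j) with hq
  have hp0 : p 0 = ↑u := by simp [hp, P.getVert_zero]
  have hpd : p d = ↑v := by
    simp only [hp, ← hPlen, P.getVert_length]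
  have hq0 : q 0 = ↑u := by simp [hq, Q.getVert_zero]
  have hqm : q m = ↑v := by
    simp only [hq, ← hQlen, Q.getVert_length]
  have hpmem : ∀ i, p i ∈ K := fun i => Finset.mem_coe.mp (P.getVert i).2
  have hpinj : ∀ i j, i < j → j ≤ d → p i ≠ p j := by
    intro i j hij hj hEq
    exact geodesic_getVert_ne P hP hij (by omega) (Subtype.ext hEq)
  have hqinj : ∀ i j, i < j → j ≤ m → q i ≠ q j := by
    intro i j hij hj hEq
    exact geodesic_getVert_ne Q hQ hij (by omega) (Subtype.ext hEq)
  have hpadj : ∀ i j, i ≤ d → j ≤ d → (G.Adj (p i) (p j) ↔ (j = i + 1 ∨ i = j + 1)) := by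
    intro i j hi hj
    rw [show G.Adj (p i) (p j) ↔ (G.induce S).Adj (P.getVert i) (P.getVert j) from
      (induce_adj_iff _ _).symm]
    exact geodesic_adj_iff P hP (by omega) (by omega)
  have hqadj : ∀ i j, i ≤ m → j ≤ m → (G.Adj (q i) (q j) ↔ (j = i + 1 ∨ i = j + 1)) := by
    intro i j hi hj
    rw [show G.Adj (q i) (q j) ↔ (G.induce T).Adj (Q.getVert i) (Q.getVert j) from
      (induce_adj_iff _ _).symm]
    exact geodesic_adj_iff Q hQ (by omega) (by omega)
  have hqLM : ∀ j, 0 < j → j < m → q j ∈ L ∨ q j ∈ M := by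
    intro j hj0 hjm
    have hT' : q j ∈ T := (Q.getVert j).2
    have hne_u : q j ≠ ↑u := by
      rw [← hq0]; intro h; exact hqinj 0 j hj0 (by omega) h.symm
    have hne_v : q j ≠ ↑v := by
      rw [← hqm]; exact hqinj j m hjm le_rfl
    rcases hT' with h | h
    · exact absurd h hne_u
    · rcases h with h | h
      · exact absurd h hne_v
      · rcases h with h | h
        · exact Or.inl (Finset.mem_coe.mp h)
        · exact Or.inr (Finset.mem_coe.mp h)
  have hdisjpq : ∀ i j, 0 < i → i < d → 0 < j → j < m → p i ≠ q j := by
    intro i j hi0 hid hj0 hjm hEq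
    rcases hqLM j hj0 hjm with h | h
    · have := hdisjAll K hK L hL (Ne.symm hLK)
      exact (Finset.disjoint_left.mp this (hpmem i)) (hEq ▸ h)
    · have := hdisjAll K hK M hM (Ne.symm hMK)
      exact (Finset.disjoint_left.mp this (hpmem i)) (hEq ▸ h)
  have hcross : ∀ i j, 0 < i → i < d → 0 < j → j < m → ¬ G.Adj (p i) (q j) := by
    intro i j hi0 hid hj0 hjm hadj
    rcases hqLM j hj0 hjm with h | h
    · have := huniqL (p i) (hpmem i) (q j) h hadj
      rw [← hp0] at this
      exact hpinj 0 i hi0 (by omega) this.symm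
    · have := huniqM (p i) (hpmem i) (q j) h hadj
      rw [← hpd] at this
      exact hpinj i d hid le_rfl this
  -- glue and contradict C_{≥t}-freeness
  have hcopy := glue_hole G d m (by omega) hm2 p q (by rw [hp0, hq0])
    (by rw [hpd, hqm]) hpinj hqinj hpadj hqadj hdisjpq hcross
  exact hG (d + m) (by omega) hcopy
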